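/- A d-dimensional infinite word w : ℕ^d → A is URD if and only if for all sizes s ∈ ℕ^d and all directions q ∈ ℕ^d with coprime coordinates, the unidimensional word w_{q,s} is uniformly recurrent. -/
import Mathlib


/-- A unidimensional infinite word is uniformly recurrent if for every length `n`
there is a bound `b` such that every length-`b` factor contains every length-`n` factor. -/
def UniformlyRecurrent {A : Type*} (w : ℕ → A) : Prop :=
  ∀ n : ℕ, ∃ b : ℕ, ∀ p m : ℕ, ∃ k : ℕ,
    m ≤ k ∧ k + n ≤ m + b ∧ ∀ j < n, w (k + j) = w (p + j)

/-- The word along direction `q` with respect to size `s` in the `d`-dimensional word `w`: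
its `ℓ`-th letter is the block of size `s` at position `ℓ • q`. -/
def dirWord {d : ℕ} {A : Type*} (w : (Fin d → ℕ) → A) (q s : Fin d → ℕ) :
    ℕ → ({i : Fin d → ℕ // ∀ j, i j < s j} → A) :=
  fun ℓ i => w (fun j => i.1 j + ℓ * q j)

/-- Uniformly recurrent along all directions. -/
def IsURD {d : ℕ} {A : Type*} (w : (Fin d → ℕ) → A) : Prop :=
  ∀ s q : Fin d → ℕ, Finset.univ.gcd q = 1 →
    ∃ b : ℕ, ∀ m : ℕ, ∃ k : ℕ, m ≤ k ∧ k < m + b ∧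
      dirWord w q s k = dirWord w q s 0

/-- Strongly uniformly recurrent along all directions: the bound depends only on the size. -/
def IsSURD {d : ℕ} {A : Type*} (w : (Fin d → ℕ) → A) : Prop :=
  ∀ s : Fin d → ℕ, ∃ b : ℕ, ∀ q : Fin d → ℕ, Finset.univ.gcd q = 1 →
    ∀ m : ℕ, ∃ k : ℕ, m ≤ k ∧ k < m + b ∧
      dirWord w q s k = dirWord w q s 0

/-- Super strongly uniformly recurrent along all directions from any origin. -/
def IsSSURDO {d : ℕ} {A : Type*} (w : (Fin d → ℕ) → A) : Prop :=
  ∀ s : Fin d → ℕ, ∃ b : ℕ, ∀ q : Fin d → ℕ, Finset.univ.gcd q = 1 →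
    ∀ p : Fin d → ℕ, ∀ m : ℕ, ∃ k : ℕ, m ≤ k ∧ k < m + b ∧
      dirWord (fun i => w (fun j => i j + p j)) q s k =
        dirWord (fun i => w (fun j => i j + p j)) q s 0

/-- Uniform recurrence for `d`-dimensional words: every prefix of size `s` occurs
in every factor of size `(b,…,b)`. -/
def IsUR {d : ℕ} {A : Type*} (w : (Fin d → ℕ) → A) : Prop :=
  ∀ s : Fin d → ℕ, ∃ b : ℕ, ∀ p : Fin d → ℕ, ∃ r : Fin d → ℕ,
    (∀ j, p j ≤ r j ∧ r j + s j ≤ p j + b) ∧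
    ∀ i : Fin d → ℕ, (∀ j, i j < s j) → w (fun j => r j + i j) = w i

/-- The letter type of `dirWord` is finite. -/
lemma aux_finite_box {d : ℕ} (s : Fin d → ℕ) :
    Finite {i : Fin d → ℕ // ∀ j, i j < s j} := by
  apply Finite.of_injective (fun i => (fun j => (⟨i.1 j, i.2 j⟩ : Fin (s j))))
  intro i₁ i₂ h
  apply Subtype.ext
  funext j
  have := congrFun h j
  simpa [Fin.mk.injEq] using this

/-- Shift lemma: an occurrence of the prefix letter at the bigger size
`s + p0 • q` gives an occurrence of the letter at position `p0` at size `s`. -/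
lemma aux_shift {d : ℕ} {A : Type*} (w : (Fin d → ℕ) → A) (q s : Fin d → ℕ)
    (p0 ℓ : ℕ)
    (h : dirWord w q (fun j => s j + p0 * q j) ℓ =
         dirWord w q (fun j => s j + p0 * q j) 0) :
    dirWord w q s (ℓ + p0) = dirWord w q s p0 := by
  funext i
  have hi : ∀ j, i.1 j + p0 * q j < s j + p0 * q j := fun j => by
    have := i.2 j; omega
  have h2 := congrFun h ⟨fun j => i.1 j + p0 * q j, hi⟩
  simp only [dirWord] at h2 ⊢
  convert h2 using 2
  · funext j; ring
  · funext j; ring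

/-- Key lemma: `IsURD` implies that every single letter of `dirWord w q s`
recurs with a bounded gap, uniformly in the letter. -/
lemma aux_key {d : ℕ} {A : Type*} [Finite A] {w : (Fin d → ℕ) → A}
    (h : IsURD w) (s q : Fin d → ℕ) (hq : Finset.univ.gcd q = 1) :
    ∃ b : ℕ, ∀ p m : ℕ, ∃ k : ℕ, m ≤ k ∧ k < m + b ∧
      dirWord w q s k = dirWord w q s p := by
  classical
  haveI := aux_finite_box s
  haveI : Fintype ({i : Fin d → ℕ // ∀ j, i j < s j} → A) := Fintype.ofFinite _
  set F := dirWord w q s with hF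
  -- bound from URD at the enlarged size
  set bb : ℕ → ℕ := fun p0 => (h (fun j => s j + p0 * q j) q hq).choose with hbbdef
  have hbb : ∀ p0 m : ℕ, ∃ ℓ : ℕ, m ≤ ℓ ∧ ℓ < m + bb p0 ∧
      dirWord w q (fun j => s j + p0 * q j) ℓ =
        dirWord w q (fun j => s j + p0 * q j) 0 :=
    fun p0 => (h (fun j => s j + p0 * q j) q hq).choose_spec
  -- representative positions for each letter value
  set ρ : ({i : Fin d → ℕ // ∀ j, i j < s j} → A) → ℕ :=
    fun v => if hv : ∃ p, F p = v then hv.choose else 0 with hρdef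
  refine ⟨Finset.univ.sup (fun v => ρ v + bb (ρ v)), fun p m => ?_⟩
  have hv : ∃ p', F p' = F p := ⟨p, rfl⟩
  have hρ : ρ (F p) = hv.choose := by simp [hρdef, hv]
  have hrep : F (ρ (F p)) = F p := by rw [hρ]; exact hv.choose_spec
  clear hρdef hbbdef hρ
  clear_value bb ρ
  obtain ⟨ℓ, hℓ1, hℓ2, hℓ3⟩ := hbb (ρ (F p)) m
  refine ⟨ℓ + ρ (F p), by omega, ?_, ?_⟩
  · have : ρ (F p) + bb (ρ (F p)) ≤ Finset.univ.sup (fun v => ρ v + bb (ρ v)) :=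
      Finset.le_sup (f := fun v => ρ v + bb (ρ v)) (Finset.mem_univ (F p))
    refine lt_of_lt_of_le (Nat.add_lt_add_right hℓ2 (ρ (F p))) ?_
    refine le_trans (le_of_eq (by ring)) (Nat.add_le_add_left this m)
  · exact (aux_shift w q s (ρ (F p)) ℓ hℓ3).trans hrep

theorem stmt_7 {d : ℕ} {A : Type*} [Finite A] (w : (Fin d → ℕ) → A) :
    IsURD w ↔
      ∀ s q : Fin d → ℕ, Finset.univ.gcd q = 1 →
        UniformlyRecurrent (dirWord w q s) := by
  constructor
  · intro h s q hq n
    obtain ⟨b, hb⟩ := aux_key h (fun j => s j + n * q j) q hq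
    refine ⟨b + n, fun p m => ?_⟩
    obtain ⟨k, hk1, hk2, hk3⟩ := hb p m
    refine ⟨k, hk1, by omega, fun j hj => ?_⟩
    funext i
    have hmul : ∀ t, j * q t ≤ n * q t := fun t =>
      Nat.mul_le_mul_right (q t) hj.le
    have hi : ∀ t, i.1 t + j * q t < s t + n * q t := fun t => by
      have := i.2 t; have := hmul t; omega
    have h2 := congrFun hk3 ⟨fun t => i.1 t + j * q t, hi⟩
    simp only [dirWord] at h2 ⊢
    convert h2 using 2
    · funext t; ring
    · funext t; ring
  · intro h s q hq
    obtain ⟨b, hb⟩ := h s q hq 1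
    refine ⟨b, fun m => ?_⟩
    obtain ⟨k, hk1, hk2, hk3⟩ := hb 0 m
    exact ⟨k, hk1, by omega, by simpa using hk3 0 (by norm_num)⟩
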